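/- If g : ℂ → ℝ satisfies g(z) = -log|z|² + h(z) near 0 with h continuous at 0, and f is C¹ near 0, then lim_{r→0⁺} [ (1/2π) ∫₀^{2π} g(r e^{iθ}) · r · (∂f/∂r)(r e^{iθ}) dθ - (1/2π) ∫₀^{2π} f(r e^{iθ}) · r · (∂g/∂r)(r e^{iθ}) dθ ] = 2 f(0), where ∂/∂r denotes the radial derivative. -/

import Mathlib

open Filter Topology Real

/-- Boundary computation at `∂U_r(w)` in Lemma 2.3: if `g = -log|z|² + h` near `0`
with `h` continuous at `0`, whose radial-derivative contribution `r·∂h/∂r` tends to `0`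
uniformly in `θ`, and `f` is `C¹` near `0` (continuous with bounded radial derivative
`df`), then
`(1/2π)∫ g·r·∂f/∂r dθ - (1/2π)∫ f·r·∂g/∂r dθ → 2 f(0)` as `r → 0⁺`.
Here `df dg dh : ℝ → ℝ → ℝ` denote the radial derivatives in polar coordinates. -/
theorem log_singular_boundary_limit
    (f g h : ℂ → ℝ) (df dg dh : ℝ → ℝ → ℝ) (ε M : ℝ) (hε : 0 < ε)
    -- `g(z) = -log|z|² + h(z)` near `0`
    (hg : ∀ z : ℂ, z ≠ 0 → ‖z‖ < ε →
      g z = -Real.log (‖z‖ ^ 2) + h z)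
    (hh : ContinuousAt h 0)
    -- radial derivative of `g` is `-2/r` plus that of `h`
    (hdg : ∀ r θ : ℝ, 0 < r → r < ε → dg r θ = -2 / r + dh r θ)
    -- `r ∂h/∂r → 0` uniformly in `θ`
    (hdh : ∀ δ : ℝ, 0 < δ → ∃ ρ > 0, ∀ r θ : ℝ, 0 < r → r < ρ → |r * dh r θ| < δ)
    -- `f` is C¹ near `0`: continuous at `0` with bounded radial derivative
    (hf : ContinuousAt f 0)
    (hfc : Continuous f)
    (hdf : ∀ r θ : ℝ, 0 < r → r < ε → |df r θ| ≤ M)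
    -- the radial derivatives are genuine derivatives along rays
    (hdf' : ∀ r θ : ℝ, 0 < r → r < ε →
      HasDerivAt (fun t : ℝ => f (t * Complex.exp (θ * Complex.I))) (df r θ) r)
    (hdg' : ∀ r θ : ℝ, 0 < r → r < ε →
      HasDerivAt (fun t : ℝ => g (t * Complex.exp (θ * Complex.I))) (dg r θ) r)
    -- integrability in the angular variable
    (hcont : ∀ r : ℝ, 0 < r → r < ε →
      (Continuous fun θ => df r θ) ∧ Continuous fun θ => dg r θ)
    (hgc : ContinuousOn g {z : ℂ | z ≠ 0}) :
    Tendsto (fun r : ℝ =>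
        (1 / (2 * π)) * ∫ θ in (0:ℝ)..(2 * π),
            g (r * Complex.exp (θ * Complex.I)) * (r * df r θ) -
        (1 / (2 * π)) * ∫ θ in (0:ℝ)..(2 * π),
            f (r * Complex.exp (θ * Complex.I)) * (r * dg r θ))
      (𝓝[>] 0) (𝓝 (2 * f 0)) := by
  have hπ : 0 < π := Real.pi_pos
  have habs : ∀ r θ : ℝ, 0 ≤ r →
      ‖(r : ℂ) * Complex.exp (θ * Complex.I)‖ = r := by
    intro r θ hr
    rw [norm_mul, Complex.norm_exp_ofReal_mul_I, mul_one, Complex.norm_real, Real.norm_eq_abs, abs_of_nonneg hr]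
  have hne : ∀ r θ : ℝ, 0 < r → ((r : ℂ) * Complex.exp (θ * Complex.I)) ≠ 0 := by
    intro r θ hr hz
    have := habs r θ hr.le
    rw [hz, norm_zero] at this
    linarith
  have hM : 0 ≤ M :=
    le_trans (abs_nonneg _) (hdf (ε / 2) 0 (by positivity) (by linarith))
  -- continuity bounds near 0
  obtain ⟨ρ₁, hρ₁, hfb⟩ : ∃ ρ₁ > 0, ∀ z : ℂ, ‖z‖ < ρ₁ → |f z - f 0| < 1 := by
    obtain ⟨ρ₁, hρ₁, hb⟩ := Metric.continuousAt_iff.mp hf 1 one_pos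
    exact ⟨ρ₁, hρ₁, fun z hz => by
      simpa [Real.dist_eq, Complex.dist_eq] using hb (by simpa [Complex.dist_eq] using hz)⟩
  obtain ⟨ρ₃, hρ₃, hhb⟩ : ∃ ρ₃ > 0, ∀ z : ℂ, ‖z‖ < ρ₃ → |h z - h 0| < 1 := by
    obtain ⟨ρ₃, hρ₃, hb⟩ := Metric.continuousAt_iff.mp hh 1 one_pos
    exact ⟨ρ₃, hρ₃, fun z hz => by
      simpa [Real.dist_eq, Complex.dist_eq] using hb (by simpa [Complex.dist_eq] using hz)⟩
  obtain ⟨ρ₂, hρ₂, hdh1⟩ := hdh 1 one_pos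
  -- r ↦ r, r ↦ r |log r| tend to 0
  have hr0 : Tendsto (fun r : ℝ => r) (𝓝[>] (0:ℝ)) (𝓝 0) :=
    tendsto_id.mono_right nhdsWithin_le_nhds
  have hlog : Tendsto (fun r : ℝ => r * |Real.log r|) (𝓝[>] (0:ℝ)) (𝓝 0) := by
    have h0 : Tendsto (fun r : ℝ => r * Real.log r) (𝓝 0) (𝓝 0) := by
      simpa using Real.continuous_mul_log.tendsto 0
    have h1 := (h0.mono_left (nhdsWithin_le_nhds : 𝓝[>] (0:ℝ) ≤ 𝓝 0)).abs
    rw [abs_zero] at h1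
    refine h1.congr' ?_
    filter_upwards [self_mem_nhdsWithin] with r hr
    rw [abs_mul, abs_of_nonneg (le_of_lt hr)]
  -- continuity of θ ↦ r e^{iθ}
  have hcurve : ∀ r : ℝ, Continuous fun θ : ℝ => (r : ℂ) * Complex.exp (θ * Complex.I) :=
    fun r => continuous_const.mul
      (Complex.continuous_exp.comp (Complex.continuous_ofReal.mul continuous_const))
  -- uniform estimate for the first integrand
  have key_est : ∀ᶠ (r : ℝ) in 𝓝[>] (0:ℝ), ∀ θ : ℝ,
      |g ((r : ℂ) * Complex.exp (θ * Complex.I)) * (r * df r θ)| ≤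
        2 * (r * |Real.log r|) * M + r * (|h 0| + 1) * M := by
    filter_upwards [Ioo_mem_nhdsGT_of_mem
      (Set.mem_Ico.mpr ⟨le_refl 0, lt_min hε hρ₃⟩)] with r hr θ
    obtain ⟨hr0', hrlt⟩ := hr
    have hrε : r < ε := lt_of_lt_of_le hrlt (min_le_left _ _)
    have hrρ₃ : r < ρ₃ := lt_of_lt_of_le hrlt (min_le_right _ _)
    set z := (r : ℂ) * Complex.exp (θ * Complex.I) with hz
    have habsz : ‖z‖ = r := habs r θ hr0'.le
    have hgz : g z = -Real.log (r ^ 2) + h z := by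
      rw [hg z (hne r θ hr0') (by rw [habsz]; exact hrε), habsz]
    have hhz : |h z| ≤ |h 0| + 1 := by
      have := hhb z (by rw [habsz]; exact hrρ₃)
      calc |h z| = |(h z - h 0) + h 0| := by ring_nf
        _ ≤ |h z - h 0| + |h 0| := abs_add_le _ _
        _ ≤ |h 0| + 1 := by linarith
    have hgb : |g z| ≤ 2 * |Real.log r| + (|h 0| + 1) := by
      rw [hgz]
      calc |(-Real.log (r ^ 2) + h z)| ≤ |Real.log (r ^ 2)| + |h z| := by
            have := abs_add_le (-Real.log (r ^ 2)) (h z)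
            rwa [abs_neg] at this
        _ ≤ 2 * |Real.log r| + (|h 0| + 1) := by
            rw [show (r:ℝ) ^ 2 = r ^ (2:ℕ) from rfl, Real.log_pow]
            push_cast
            rw [abs_mul, abs_two]
            linarith
    have : |g z * (r * df r θ)| ≤ (2 * |Real.log r| + (|h 0| + 1)) * (r * M) := by
      rw [abs_mul, abs_mul, abs_of_nonneg hr0'.le]
      exact mul_le_mul hgb
        (mul_le_mul_of_nonneg_left (hdf r θ hr0' hrε) hr0'.le)
        (by positivity) (by positivity)
    calc |g z * (r * df r θ)| ≤ (2 * |Real.log r| + (|h 0| + 1)) * (r * M) := this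
      _ = 2 * (r * |Real.log r|) * M + r * (|h 0| + 1) * M := by ring
  -- the majorant tends to 0
  have hGlim : Tendsto (fun r : ℝ => 2 * (r * |Real.log r|) * M + r * (|h 0| + 1) * M)
      (𝓝[>] (0:ℝ)) (𝓝 0) := by
    have := ((hlog.const_mul 2).mul_const M).add ((hr0.mul_const (|h 0| + 1)).mul_const M)
    simpa using this
  -- first integral tends to 0
  have key1 : Tendsto (fun r : ℝ => ∫ θ in (0:ℝ)..(2 * π),
      g ((r : ℂ) * Complex.exp (θ * Complex.I)) * (r * df r θ)) (𝓝[>] (0:ℝ)) (𝓝 0) := by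
    have hzero : (𝓝 (0:ℝ)) = 𝓝 (∫ _θ in (0:ℝ)..(2 * π), (0:ℝ)) := by simp
    rw [hzero]
    apply intervalIntegral.tendsto_integral_filter_of_dominated_convergence
      (bound := fun _ => 2 * M)
    · -- measurability
      filter_upwards [Ioo_mem_nhdsGT_of_mem (Set.mem_Ico.mpr ⟨le_refl 0, hε⟩)] with r hr
      have hcg : Continuous fun θ : ℝ => g ((r : ℂ) * Complex.exp (θ * Complex.I)) :=
        hgc.comp_continuous (hcurve r) (fun θ => hne r θ hr.1)
      exact (hcg.mul (continuous_const.mul (hcont r hr.1 hr.2).1)).aestronglyMeasurable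
    · -- bound
      have hsm1 : ∀ᶠ r in 𝓝[>] (0:ℝ), r * |Real.log r| < 1 / 2 :=
        hlog.eventually_lt_const (by norm_num)
      have hsm2 : ∀ᶠ r in 𝓝[>] (0:ℝ), r * (|h 0| + 1) < 1 :=
        (hr0.mul_const (|h 0| + 1)).eventually_lt_const (by norm_num)
      filter_upwards [key_est, hsm1, hsm2] with r hkey h1 h2
      refine Filter.Eventually.of_forall fun θ _ => ?_
      rw [Real.norm_eq_abs]
      have := hkey θ
      nlinarith [hM]
    · exact intervalIntegrable_const
    · refine Filter.Eventually.of_forall fun θ _ => ?_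
      refine squeeze_zero_norm' ?_ hGlim
      filter_upwards [key_est] with r hkey
      rw [Real.norm_eq_abs]
      exact hkey θ
  -- second integral tends to ∫ (-2 f 0)
  have key2 : Tendsto (fun r : ℝ => ∫ θ in (0:ℝ)..(2 * π),
      f ((r : ℂ) * Complex.exp (θ * Complex.I)) * (r * dg r θ)) (𝓝[>] (0:ℝ))
      (𝓝 (∫ _θ in (0:ℝ)..(2 * π), (-2 * f 0))) := by
    apply intervalIntegral.tendsto_integral_filter_of_dominated_convergence
      (bound := fun _ => (|f 0| + 1) * 3)
    · filter_upwards [Ioo_mem_nhdsGT_of_mem (Set.mem_Ico.mpr ⟨le_refl 0, hε⟩)] with r hr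
      exact (((hfc.comp (hcurve r))).mul
        (continuous_const.mul (hcont r hr.1 hr.2).2)).aestronglyMeasurable
    · filter_upwards [Ioo_mem_nhdsGT_of_mem
        (Set.mem_Ico.mpr ⟨le_refl 0, lt_min hε (lt_min hρ₁ hρ₂)⟩)] with r hr
      refine Filter.Eventually.of_forall fun θ _ => ?_
      obtain ⟨hr0', hrlt⟩ := hr
      have hrε : r < ε := lt_of_lt_of_le hrlt (min_le_left _ _)
      have hrρ₁ : r < ρ₁ := lt_of_lt_of_le hrlt (le_trans (min_le_right _ _) (min_le_left _ _))
      have hrρ₂ : r < ρ₂ := lt_of_lt_of_le hrlt (le_trans (min_le_right _ _) (min_le_right _ _))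
      set z := (r : ℂ) * Complex.exp (θ * Complex.I) with hz
      have hfz : |f z| ≤ |f 0| + 1 := by
        have := hfb z (by rw [habs r θ hr0'.le]; exact hrρ₁)
        calc |f z| = |(f z - f 0) + f 0| := by ring_nf
          _ ≤ |f z - f 0| + |f 0| := abs_add_le _ _
          _ ≤ |f 0| + 1 := by linarith
      have hrdg : r * dg r θ = -2 + r * dh r θ := by
        rw [hdg r θ hr0' hrε]
        field_simp
      have hrdgb : |r * dg r θ| ≤ 3 := by
        rw [hrdg]
        calc |(-2 + r * dh r θ)| ≤ |(-2 : ℝ)| + |r * dh r θ| := abs_add_le _ _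
          _ ≤ 3 := by
            have := hdh1 r θ hr0' hrρ₂
            rw [abs_neg, abs_two]
            linarith
      rw [Real.norm_eq_abs, abs_mul]
      exact mul_le_mul hfz hrdgb (abs_nonneg _) (by positivity)
    · exact intervalIntegrable_const
    · refine Filter.Eventually.of_forall fun θ _ => ?_
      have hc : Tendsto (fun r : ℝ => (r : ℂ) * Complex.exp (θ * Complex.I)) (𝓝 0) (𝓝 0) := by
        simpa using (show Continuous (fun r : ℝ => (r : ℂ) * Complex.exp (θ * Complex.I)) by fun_prop).tendsto 0
      have hA : Tendsto (fun r : ℝ => f ((r : ℂ) * Complex.exp (θ * Complex.I)))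
          (𝓝[>] (0:ℝ)) (𝓝 (f 0)) :=
        (hfc.tendsto 0).comp (hc.mono_left nhdsWithin_le_nhds)
      have hdh0 : Tendsto (fun r : ℝ => r * dh r θ) (𝓝[>] (0:ℝ)) (𝓝 0) := by
        rw [NormedAddCommGroup.tendsto_nhds_zero]
        intro δ hδ
        obtain ⟨ρ, hρ, hb⟩ := hdh δ hδ
        filter_upwards [Ioo_mem_nhdsGT_of_mem (Set.mem_Ico.mpr ⟨le_refl 0, hρ⟩)] with r hr
        rw [Real.norm_eq_abs]
        exact hb r θ hr.1 hr.2
      have hB0 : Tendsto (fun r : ℝ => -2 + r * dh r θ) (𝓝[>] (0:ℝ)) (𝓝 (-2)) := by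
        simpa using tendsto_const_nhds.add hdh0
      have hB : Tendsto (fun r : ℝ => r * dg r θ) (𝓝[>] (0:ℝ)) (𝓝 (-2)) := by
        refine hB0.congr' ?_
        filter_upwards [Ioo_mem_nhdsGT_of_mem (Set.mem_Ico.mpr ⟨le_refl 0, hε⟩)] with r hr
        have hrne : r ≠ 0 := ne_of_gt hr.1
        rw [hdg r θ hr.1 hr.2]
        field_simp
      convert hA.mul hB using 2
      ring
  have final := (key1.const_mul (1 / (2 * π))).sub (key2.const_mul (1 / (2 * π)))
  have hval : (2:ℝ) * f 0 =
      1 / (2 * π) * 0 - 1 / (2 * π) * ∫ _θ in (0:ℝ)..(2 * π), (-2 * f 0) := by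
    rw [intervalIntegral.integral_const, smul_eq_mul]
    field_simp
    ring
  rw [hval]
  refine final.congr' ?_
  filter_upwards [Ioo_mem_nhdsGT_of_mem (Set.mem_Ico.mpr ⟨le_refl 0, hε⟩)] with r hr
  have hcg : Continuous fun θ : ℝ => g ((r : ℂ) * Complex.exp (θ * Complex.I)) :=
    hgc.comp_continuous (hcurve r) (fun θ => hne r θ hr.1)
  have hAint : IntervalIntegrable
      (fun θ : ℝ => g ((r : ℂ) * Complex.exp (θ * Complex.I)) * (r * df r θ))
      MeasureTheory.volume 0 (2 * π) :=
    (hcg.mul (continuous_const.mul (hcont r hr.1 hr.2).1)).intervalIntegrable 0 (2 * π)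
  rw [intervalIntegral.integral_sub hAint intervalIntegrable_const,
    intervalIntegral.integral_const, smul_eq_mul]
  field_simp
  have e1 : ∫ x in (0:ℝ)..2 * π, r * g (↑r * Complex.exp (Complex.I * ↑x)) * df r x =
      ∫ θ in (0:ℝ)..2 * π, g (↑r * Complex.exp (↑θ * Complex.I)) * r * df r θ :=
    intervalIntegral.integral_congr (fun x _ => by simp only [mul_comm Complex.I]; ring)
  rw [e1]
  ring
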